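/- If Λ = exp(L) with L = u ∧^g w ∈ so(g), then S := exp(σ(L)) preserves the extended metric: ĝ(Sψ, Sφ) = ĝ(ψ, φ) for all ψ, φ ∈ Cl(V,g). -/

import Mathlib

open CliffordAlgebra

noncomputable section

variable {V : Type} [AddCommGroup V] [Module ℝ V]

/-- Clifford conjugation `†`: the linear extension of
`(e_{α₁}⋯e_{α_k})† = (-1)^k e_{α_k}⋯e_{α₁}`, i.e. reversal composed with
the grade involution. -/
def cliffConj (Q : QuadraticForm ℝ V) : CliffordAlgebra Q →ₗ[ℝ] CliffordAlgebra Q :=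
  reverse (R := ℝ) ∘ₗ involute.toLinearMap

/-- The scalar (`e_∅`) component `⟨ψ⟩_∅` of a Clifford algebra element, i.e. the
coefficient of `1` in the canonical basis expansion.  Since left multiplication by a
basis element `e_I` with `I ≠ ∅` is traceless, this equals the normalized trace of
left multiplication by `ψ`. -/
def scalarPart (Q : QuadraticForm ℝ V) (ψ : CliffordAlgebra Q) : ℝ :=
  LinearMap.trace ℝ (CliffordAlgebra Q) (LinearMap.mulLeft ℝ ψ) /
    Module.finrank ℝ (CliffordAlgebra Q)

/-- The extended metric `ĝ(ψ,φ) = -½⟨ψ†φ + φ†ψ⟩_∅`. -/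
def gHat (Q : QuadraticForm ℝ V) (ψ φ : CliffordAlgebra Q) : ℝ :=
  -(1/2) * scalarPart Q (cliffConj Q ψ * φ + cliffConj Q φ * ψ)

/-- `γ_v`: left Clifford multiplication by the vector `v`. -/
def gammaL (Q : QuadraticForm ℝ V) (v : V) : Module.End ℝ (CliffordAlgebra Q) :=
  LinearMap.mulLeft ℝ (ι Q v)

/-- The symmetric bilinear form `g` obtained from `Q` by polarization:
`g(u,v) = ½(Q(u+v) - Q u - Q v)`, so that `e_α e_β + e_β e_α = 2 g_{αβ}`. -/
def gForm (Q : QuadraticForm ℝ V) (u v : V) : ℝ := QuadraticMap.polar Q u v / 2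

/-- The spin representation on elementary elements:
`σ(u ∧^g v) := ¼(γ_u γ_v - γ_v γ_u)`. -/
def sigmaSpin (Q : QuadraticForm ℝ V) (u v : V) : Module.End ℝ (CliffordAlgebra Q) :=
  (1/4 : ℝ) • (gammaL Q u * gammaL Q v - gammaL Q v * gammaL Q u)

/-- The polarization bilinear form `g` of `Q`, with `g(u,v) = ½ polar Q u v`. -/
def gBilin (Q : QuadraticForm ℝ V) : LinearMap.BilinForm ℝ V :=
  (1/2 : ℝ) • QuadraticMap.polarBilin Q

/-- The elementary skew-adjoint endomorphism `u ∧^g v : w ↦ g(v,w) u - g(u,w) v`. -/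
def wedgeG (g : LinearMap.BilinForm ℝ V) (u v : V) : Module.End ℝ V :=
  (g v).smulRight u - (g u).smulRight v

/-- The exponential of an endomorphism of a finite-dimensional real vector space,
computed through the matrix exponential in an arbitrary basis (the result is
basis-independent). -/
def endExp {W : Type} [AddCommGroup W] [Module ℝ W] [FiniteDimensional ℝ W]
    (f : Module.End ℝ W) : Module.End ℝ W :=
  (LinearMap.toMatrix (Module.finBasis ℝ W) (Module.finBasis ℝ W)).symm
    (NormedSpace.exp (LinearMap.toMatrix (Module.finBasis ℝ W) (Module.finBasis ℝ W) f))

/-! ### Auxiliary lemmas about `endExp` -/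

section EndExpAux

open NormedSpace Matrix

theorem aux_exp_mulVec_of_mulVec_eq_zero {n : Type} [Fintype n] [DecidableEq n]
    (M : Matrix n n ℝ) (v : n → ℝ) (h : M *ᵥ v = 0) : exp M *ᵥ v = v := by
  letI : SeminormedRing (Matrix n n ℝ) := Matrix.linftyOpSemiNormedRing
  letI : NormedRing (Matrix n n ℝ) := Matrix.linftyOpNormedRing
  letI : NormedAlgebra ℝ (Matrix n n ℝ) := Matrix.linftyOpNormedAlgebra
  letI : CompleteSpace (Matrix n n ℝ) := FiniteDimensional.complete ℝ _
  have hs : Summable (fun k : ℕ => ((Nat.factorial k : ℝ)⁻¹) • M ^ k) := expSeries_summable' M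
  let T : Matrix n n ℝ →ₗ[ℝ] (n → ℝ) :=
    { toFun := fun N => N *ᵥ v
      map_add' := fun N₁ N₂ => Matrix.add_mulVec N₁ N₂ v
      map_smul' := fun c N => Matrix.smul_mulVec c N v }
  have hT : Continuous T := T.continuous_of_finiteDimensional
  have key : T (exp M) = ∑' k : ℕ, T (((Nat.factorial k : ℝ)⁻¹) • M ^ k) := by
    rw [exp_eq_tsum ℝ]
    exact (hs.hasSum.map T hT).tsum_eq.symm
  have hterm : ∀ k : ℕ, k ≠ 0 → T (((Nat.factorial k : ℝ)⁻¹) • M ^ k) = 0 := by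
    intro k hk
    obtain ⟨j, rfl⟩ := Nat.exists_eq_succ_of_ne_zero hk
    have : M ^ (j + 1) *ᵥ v = 0 := by
      rw [pow_succ, ← Matrix.mulVec_mulVec, h, Matrix.mulVec_zero]
    simp only [T, LinearMap.coe_mk, AddHom.coe_mk, Matrix.smul_mulVec, this, smul_zero]
  have : T (exp M) = v := by
    rw [key, tsum_eq_single 0 hterm]
    simp [T]
  simpa [T] using this

variable {W : Type} [AddCommGroup W] [Module ℝ W] [FiniteDimensional ℝ W]

local notation "𝓐" => LinearMap.toMatrix (Module.finBasis ℝ W) (Module.finBasis ℝ W)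

theorem aux_toMatrix_endExp (f : Module.End ℝ W) : 𝓐 (endExp f) = exp (𝓐 f) :=
  (LinearMap.toMatrix _ _).apply_symm_apply _

theorem aux_commute_endExp {f g : Module.End ℝ W} (h : Commute f g) :
    Commute (endExp f) g := by
  have hc : Commute (𝓐 f) (𝓐 g) := by
    unfold Commute SemiconjBy at h ⊢
    rw [← LinearMap.toMatrix_mul, ← LinearMap.toMatrix_mul, h]
  have := hc.exp_left
  unfold Commute SemiconjBy at this ⊢
  apply (LinearMap.toMatrix (Module.finBasis ℝ W) (Module.finBasis ℝ W)).injective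
  rw [LinearMap.toMatrix_mul, LinearMap.toMatrix_mul, aux_toMatrix_endExp, this]

theorem aux_endExp_add_of_commute {f g : Module.End ℝ W} (h : Commute f g) :
    endExp (f + g) = endExp f * endExp g := by
  have hc : Commute (𝓐 f) (𝓐 g) := by
    unfold Commute SemiconjBy at h ⊢
    rw [← LinearMap.toMatrix_mul, ← LinearMap.toMatrix_mul, h]
  apply (LinearMap.toMatrix (Module.finBasis ℝ W) (Module.finBasis ℝ W)).injective
  rw [aux_toMatrix_endExp, map_add, LinearMap.toMatrix_mul, aux_toMatrix_endExp,
    aux_toMatrix_endExp]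
  exact Matrix.exp_add_of_commute _ _ hc

theorem aux_endExp_conj (c f : Module.End ℝ W) (hc : c * c = 1) :
    endExp (c * f * c) = c * endExp f * c := by
  have hMc : 𝓐 c * 𝓐 c = 1 := by
    rw [← LinearMap.toMatrix_mul, hc, LinearMap.toMatrix_one]
  let U : (Matrix (Fin (Module.finrank ℝ W)) (Fin (Module.finrank ℝ W)) ℝ)ˣ :=
    ⟨𝓐 c, 𝓐 c, hMc, hMc⟩
  apply (LinearMap.toMatrix (Module.finBasis ℝ W) (Module.finBasis ℝ W)).injective
  rw [aux_toMatrix_endExp, LinearMap.toMatrix_mul, LinearMap.toMatrix_mul,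
    LinearMap.toMatrix_mul, LinearMap.toMatrix_mul, aux_toMatrix_endExp]
  exact Matrix.exp_units_conj U (𝓐 f)

theorem aux_endExp_apply_of_eq_zero {f : Module.End ℝ W} {x : W} (h : f x = 0) :
    endExp f x = x := by
  set B := Module.finBasis ℝ W
  apply B.repr.injective
  have h1 : 𝓐 (endExp f) *ᵥ (B.repr x) = B.repr (endExp f x) :=
    LinearMap.toMatrix_mulVec_repr B B (endExp f) x
  have h2 : 𝓐 f *ᵥ (B.repr x) = 0 := by
    rw [LinearMap.toMatrix_mulVec_repr B B f x, h, map_zero]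
    rfl
  have h3 := aux_exp_mulVec_of_mulVec_eq_zero (𝓐 f) (B.repr x) h2
  rw [← aux_toMatrix_endExp] at h3
  ext i
  have := congrFun (h1.symm.trans h3) i
  simpa using this

end EndExpAux

/-! ### Auxiliary lemmas about the Clifford conjugation -/

theorem aux_cliffConj_mul (Q : QuadraticForm ℝ V) (x y : CliffordAlgebra Q) :
    cliffConj Q (x * y) = cliffConj Q y * cliffConj Q x := by
  simp [cliffConj, reverse.map_mul]

theorem aux_cliffConj_cliffConj (Q : QuadraticForm ℝ V) (x : CliffordAlgebra Q) :
    cliffConj Q (cliffConj Q x) = x := by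
  simp only [cliffConj, LinearMap.comp_apply, AlgHom.toLinearMap_apply]
  rw [← reverse_involute, involute_involute, reverse_reverse]

theorem aux_cliffConj_one (Q : QuadraticForm ℝ V) : cliffConj Q (1 : CliffordAlgebra Q) = 1 := by
  simp [cliffConj]

theorem aux_cliffConj_ι (Q : QuadraticForm ℝ V) (v : V) :
    cliffConj Q (ι Q v) = -ι Q v := by
  simp [cliffConj]

/-- if `L = u ∧^g w ∈ so(g)`, then `S = exp(σ(L))` preserves the
extended metric: `ĝ(Sψ, Sφ) = ĝ(ψ, φ)`. -/
theorem exp_sigma_preserves_gHat (Q : QuadraticForm ℝ V) [FiniteDimensional ℝ V]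
    [FiniteDimensional ℝ (CliffordAlgebra Q)] (u w : V)
    (S : Module.End ℝ (CliffordAlgebra Q)) (hS : S = endExp (sigmaSpin Q u w))
    (ψ φ : CliffordAlgebra Q) :
    gHat Q (S ψ) (S φ) = gHat Q ψ φ := by
  subst hS
  set b : CliffordAlgebra Q := (1/4 : ℝ) • (ι Q u * ι Q w - ι Q w * ι Q u) with hb
  -- σ(u∧w) is left multiplication by b
  have hσ : sigmaSpin Q u w = LinearMap.mulLeft ℝ b := by
    ext x
    simp [sigmaSpin, gammaL, hb, Module.End.mul_apply, smul_mul_assoc, sub_mul, mul_assoc]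
  rw [hσ]
  -- conjugate of b is -b
  have hconjb : cliffConj Q b = -b := by
    have h1 : cliffConj Q (ι Q u * ι Q w) = ι Q w * ι Q u := by
      rw [aux_cliffConj_mul, aux_cliffConj_ι, aux_cliffConj_ι, neg_mul_neg]
    have h2 : cliffConj Q (ι Q w * ι Q u) = ι Q u * ι Q w := by
      rw [aux_cliffConj_mul, aux_cliffConj_ι, aux_cliffConj_ι, neg_mul_neg]
    rw [hb, map_smul, map_sub, h1, h2]
    module
  set S := endExp (LinearMap.mulLeft ℝ b) with hSdef
  set G := endExp (LinearMap.mulRight ℝ (-b)) with hGdef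
  set s : CliffordAlgebra Q := S 1 with hs
  set t : CliffordAlgebra Q := G 1 with ht
  -- S is left multiplication by s
  have hSapp : ∀ x : CliffordAlgebra Q, S x = s * x := by
    intro x
    have hcomm := aux_commute_endExp (LinearMap.commute_mulLeft_right b x)
    have := congrArg (fun f : Module.End ℝ (CliffordAlgebra Q) => f 1) hcomm
    simpa [Module.End.mul_apply] using this
  -- G is right multiplication by t
  have hGapp : ∀ x : CliffordAlgebra Q, G x = x * t := by
    intro x
    have hcomm := aux_commute_endExp (LinearMap.commute_mulLeft_right x (-b)).symm
    have := congrArg (fun f : Module.End ℝ (CliffordAlgebra Q) => f 1) hcomm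
    simpa [Module.End.mul_apply] using this
  -- b commutes with s
  have hbs : b * s = s * b := by
    have hcomm := aux_commute_endExp (Commute.refl (LinearMap.mulLeft ℝ b))
    have := congrArg (fun f : Module.End ℝ (CliffordAlgebra Q) => f 1) hcomm
    simp only [Module.End.mul_apply, LinearMap.mulLeft_apply, mul_one] at this
    rw [← hs] at this
    rw [← this, hSapp]
  -- s * t = 1
  have hst : s * t = 1 := by
    have hA : (LinearMap.mulLeft ℝ b + LinearMap.mulRight ℝ (-b)) (1 : CliffordAlgebra Q) = 0 := by
      simp
    have h1 : endExp (LinearMap.mulLeft ℝ b + LinearMap.mulRight ℝ (-b)) (1 : CliffordAlgebra Q)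
        = 1 := aux_endExp_apply_of_eq_zero hA
    rw [aux_endExp_add_of_commute (LinearMap.commute_mulLeft_right b (-b))] at h1
    rw [Module.End.mul_apply] at h1
    rw [← hGdef, ← hSdef, ← ht, hSapp] at h1
    exact h1
  -- t * s = 1
  have hts : t * s = 1 := by
    have hcommR : Commute (LinearMap.mulRight ℝ (-b)) (LinearMap.mulRight ℝ s) := by
      unfold Commute SemiconjBy
      ext x
      simp only [Module.End.mul_apply, LinearMap.mulRight_apply]
      rw [mul_assoc, mul_assoc]
      rw [show s * -b = -b * s by rw [neg_mul, mul_neg, hbs]]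
    have hcomm := aux_commute_endExp hcommR
    have := congrArg (fun f : Module.End ℝ (CliffordAlgebra Q) => f 1) hcomm
    simp only [Module.End.mul_apply, LinearMap.mulRight_apply, one_mul] at this
    rw [← hGdef, ← ht] at this
    -- this : G s = t * s
    rw [hGapp s] at this
    rw [← this, hst]
  -- conj s = t
  have hconjs : cliffConj Q s = t := by
    set c : Module.End ℝ (CliffordAlgebra Q) := cliffConj Q with hc
    have hcc : c * c = 1 := by
      ext x
      simp only [Module.End.mul_apply, Module.End.one_apply, hc]
      exact aux_cliffConj_cliffConj Q x
    have hconjL : c * LinearMap.mulLeft ℝ b * c = LinearMap.mulRight ℝ (-b) := by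
      ext x
      simp only [Module.End.mul_apply, LinearMap.mulLeft_apply, LinearMap.mulRight_apply, hc]
      rw [aux_cliffConj_mul, aux_cliffConj_cliffConj, hconjb]
    have := aux_endExp_conj c (LinearMap.mulLeft ℝ b) hcc
    rw [hconjL, ← hSdef, ← hGdef] at this
    have happ := congrArg (fun f : Module.End ℝ (CliffordAlgebra Q) => f 1) this
    simp only [Module.End.mul_apply] at happ
    rw [← ht] at happ
    have hc1 : c (1 : CliffordAlgebra Q) = 1 := aux_cliffConj_one Q
    rw [hc1, ← hs] at happ
    exact happ.symm
  -- conclude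
  rw [hSapp ψ, hSapp φ]
  unfold gHat
  congr 1
  congr 1
  have key : ∀ x y : CliffordAlgebra Q,
      cliffConj Q (s * x) * (s * y) = cliffConj Q x * y := by
    intro x y
    rw [aux_cliffConj_mul, hconjs, mul_assoc, ← mul_assoc t s y, hts, one_mul]
  rw [key ψ φ, key φ ψ]
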